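/- Let q be an odd prime power. Then the number of conjugacy classes of GL_2(𝔽_q) equals q² − 1. -/
import Mathlib

open Matrix

set_option linter.unusedSectionVars false

section Aux

variable {F : Type} [Field F] [Fintype F] [DecidableEq F]

/-- scalar matrix as a unit -/
def sU (a : Fˣ) : GL (Fin 2) F :=
  Matrix.GeneralLinearGroup.mkOfDetNeZero !![(a:F),0;0,(a:F)]
    (by simp [Matrix.det_fin_two_of])

/-- companion matrix as a unit -/
def cU (t : F) (d : Fˣ) : GL (Fin 2) F :=
  Matrix.GeneralLinearGroup.mkOfDetNeZero !![0,-(d:F);1,t]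
    (by simp [Matrix.det_fin_two_of])

@[simp] lemma sU_coe (a : Fˣ) : (sU a : Matrix (Fin 2) (Fin 2) F) = !![(a:F),0;0,(a:F)] := rfl
@[simp] lemma cU_coe (t : F) (d : Fˣ) :
    (cU t d : Matrix (Fin 2) (Fin 2) F) = !![0,-(d:F);1,t] := rfl

lemma isConj_of_semiconj (A B : GL (Fin 2) F) (P : Matrix (Fin 2) (Fin 2) F)
    (hP : P.det ≠ 0) (h : P * (B : Matrix (Fin 2) (Fin 2) F) = (A : Matrix (Fin 2) (Fin 2) F) * P) :
    IsConj B A := by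
  rw [isConj_iff]
  refine ⟨Matrix.GeneralLinearGroup.mkOfDetNeZero P hP, ?_⟩
  have : (Matrix.GeneralLinearGroup.mkOfDetNeZero P hP) * B = A * (Matrix.GeneralLinearGroup.mkOfDetNeZero P hP) := by
    ext i j
    simpa using congrFun (congrFun h i) j
  rw [this, mul_inv_cancel_right]

lemma matrix_rel_of_isConj {A B : GL (Fin 2) F} (h : IsConj A B) :
    ∃ c : GL (Fin 2) F, (c : Matrix (Fin 2) (Fin 2) F) * A = (B : Matrix (Fin 2) (Fin 2) F) * c ∧
      (A : Matrix (Fin 2) (Fin 2) F) * c⁻¹ = (c⁻¹ : GL (Fin 2) F) * B := by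
  rw [isConj_iff] at h
  obtain ⟨c, hc⟩ := h
  refine ⟨c, ?_, ?_⟩
  · have : c * A = B * c := by rw [← hc, inv_mul_cancel_right]
    exact_mod_cast congrArg Units.val this
  · have : A * c⁻¹ = c⁻¹ * B := by rw [← hc]; group
    exact_mod_cast congrArg Units.val this

lemma trace_eq_of_isConj {A B : GL (Fin 2) F} (h : IsConj A B) :
    Matrix.trace (A : Matrix (Fin 2) (Fin 2) F) = Matrix.trace (B : Matrix (Fin 2) (Fin 2) F) := by
  obtain ⟨c, hc, hc'⟩ := matrix_rel_of_isConj h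
  have h1 : (B : Matrix (Fin 2) (Fin 2) F) = (c : Matrix (Fin 2) (Fin 2) F) * A * (c⁻¹ : GL (Fin 2) F) := by
    rw [hc, mul_assoc, ← Matrix.GeneralLinearGroup.coe_mul, mul_inv_cancel,
      Matrix.GeneralLinearGroup.coe_one, mul_one]
  rw [h1, Matrix.trace_mul_comm, ← mul_assoc, ← Matrix.GeneralLinearGroup.coe_mul,
    inv_mul_cancel, Matrix.GeneralLinearGroup.coe_one, one_mul]

lemma det_eq_of_isConj {A B : GL (Fin 2) F} (h : IsConj A B) :
    Matrix.det (A : Matrix (Fin 2) (Fin 2) F) = Matrix.det (B : Matrix (Fin 2) (Fin 2) F) := by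
  have h1 : Matrix.GeneralLinearGroup.det A = Matrix.GeneralLinearGroup.det B :=
    isConj_iff_eq.mp ((Matrix.GeneralLinearGroup.det).map_isConj h)
  have h2 := congrArg Units.val h1
  simpa using h2

/-- scalar units are central -/
lemma sU_central (a : Fˣ) (B : GL (Fin 2) F) : IsConj (sU a) B → B = sU a := by
  intro h
  rw [isConj_iff] at h
  obtain ⟨c, hc⟩ := h
  rw [← hc]
  have : c * sU a = sU a * c := by
    ext i j
    fin_cases i <;> fin_cases j <;>
      simp [Matrix.mul_apply, Fin.sum_univ_two] <;> ring
  rw [this, mul_inv_cancel_right]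

lemma not_isConj_sU_cU (a : Fˣ) (t : F) (d : Fˣ) : ¬ IsConj (sU a) (cU t d) := by
  intro h
  have := sU_central a _ h
  rw [Matrix.GeneralLinearGroup.ext_iff] at this
  have h2 := this 1 0
  simp at h2

lemma sU_inj {a b : Fˣ} (h : IsConj (sU a) (sU b)) : a = b := by
  have := sU_central a _ h
  rw [Matrix.GeneralLinearGroup.ext_iff] at this
  have h2 := this 0 0
  simp at h2
  exact (Units.ext h2).symm

lemma cU_inj {t t' : F} {d d' : Fˣ} (h : IsConj (cU t d) (cU t' d')) : t = t' ∧ d = d' := by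
  have h1 := trace_eq_of_isConj h
  have h2 := det_eq_of_isConj h
  simp [Matrix.trace_fin_two_of, Matrix.det_fin_two_of] at h1 h2
  exact ⟨h1, Units.ext (by simpa using h2)⟩

/-- classification: every element of GL₂ is conjugate to a scalar or companion unit -/
lemma exists_rep (A : GL (Fin 2) F) :
    (∃ a : Fˣ, IsConj (sU a) A) ∨ (∃ t : F, ∃ d : Fˣ, IsConj (cU t d) A) := by
  have hdet : ((A : Matrix (Fin 2) (Fin 2) F)).det ≠ 0 := by
    have : IsUnit ((A : Matrix (Fin 2) (Fin 2) F)).det :=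
      (Matrix.isUnit_iff_isUnit_det _).mp A.isUnit
    exact this.ne_zero
  by_cases hc : (A : Matrix (Fin 2) (Fin 2) F) 1 0 ≠ 0
  · right
    refine ⟨(A : Matrix (Fin 2) (Fin 2) F).trace, Units.mk0 _ hdet, ?_⟩
    apply isConj_of_semiconj _ _ !![1, (A : Matrix (Fin 2) (Fin 2) F) 0 0; 0, (A : Matrix (Fin 2) (Fin 2) F) 1 0]
    · simp [Matrix.det_fin_two_of, hc]
    · ext i j
      fin_cases i <;> fin_cases j <;>
        simp [Matrix.mul_apply, Fin.sum_univ_two, Matrix.trace_fin_two,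
          Matrix.det_fin_two] <;> ring
  by_cases hb : (A : Matrix (Fin 2) (Fin 2) F) 0 1 ≠ 0
  · right
    refine ⟨(A : Matrix (Fin 2) (Fin 2) F).trace, Units.mk0 _ hdet, ?_⟩
    apply isConj_of_semiconj _ _ !![0, (A : Matrix (Fin 2) (Fin 2) F) 0 1; 1, (A : Matrix (Fin 2) (Fin 2) F) 1 1]
    · simp [Matrix.det_fin_two_of, hb]
    · ext i j
      fin_cases i <;> fin_cases j <;>
        simp [Matrix.mul_apply, Fin.sum_univ_two, Matrix.trace_fin_two,
          Matrix.det_fin_two] <;> ring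
  push_neg at hc hb
  by_cases had : (A : Matrix (Fin 2) (Fin 2) F) 0 0 = (A : Matrix (Fin 2) (Fin 2) F) 1 1
  · left
    have ha0 : (A : Matrix (Fin 2) (Fin 2) F) 0 0 ≠ 0 := by
      intro h0
      apply hdet
      rw [Matrix.det_fin_two, hb, hc, h0]
      ring
    refine ⟨Units.mk0 _ ha0, ?_⟩
    have : sU (Units.mk0 _ ha0) = A := by
      ext i j
      fin_cases i <;> fin_cases j <;> simp [hb, hc, had]
    rw [this]
  · right
    refine ⟨(A : Matrix (Fin 2) (Fin 2) F).trace, Units.mk0 _ hdet, ?_⟩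
    apply isConj_of_semiconj _ _ !![1, (A : Matrix (Fin 2) (Fin 2) F) 0 0; 1, (A : Matrix (Fin 2) (Fin 2) F) 1 1]
    · rw [Matrix.det_fin_two_of]
      intro h
      exact had (by linear_combination -h)
    · ext i j
      fin_cases i <;> fin_cases j <;>
        simp [Matrix.mul_apply, Fin.sum_univ_two, Matrix.trace_fin_two,
          Matrix.det_fin_two, hb, hc] <;> ring

lemma card_conjClasses_GL2 :
    Nat.card (ConjClasses (GL (Fin 2) F)) = Nat.card (Fˣ ⊕ F × Fˣ) := by
  symm
  apply Nat.card_eq_of_bijective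
    (Sum.elim (fun a => ConjClasses.mk (sU a)) (fun p => ConjClasses.mk (cU p.1 p.2)))
  constructor
  · rintro (a | ⟨t, d⟩) (b | ⟨t', d'⟩) h <;> simp only [Sum.elim_inl, Sum.elim_inr] at h <;>
      rw [ConjClasses.mk_eq_mk_iff_isConj] at h
    · rw [sU_inj h]
    · exact absurd h (not_isConj_sU_cU _ _ _)
    · exact absurd h.symm (not_isConj_sU_cU _ _ _)
    · obtain ⟨h1, h2⟩ := cU_inj h; rw [h1, h2]
  · intro x
    obtain ⟨A, rfl⟩ := ConjClasses.mk_surjective x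
    rcases exists_rep A with ⟨a, ha⟩ | ⟨t, d, hd⟩
    · exact ⟨Sum.inl a, by simpa [ConjClasses.mk_eq_mk_iff_isConj] using ha⟩
    · exact ⟨Sum.inr ⟨t, d⟩, by simpa [ConjClasses.mk_eq_mk_iff_isConj] using hd⟩

end Aux

/-- For `q` an odd prime power, `GL_2(𝔽_q)` has exactly `q² − 1` conjugacy classes. -/
theorem stmt10 (q : ℕ) (hq : Odd q) (hqpp : IsPrimePow q)
    (F : Type) [Field F] [Fintype F] [DecidableEq F] (hF : Fintype.card F = q) :
    Nat.card (ConjClasses (GL (Fin 2) F)) = q ^ 2 - 1 := by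
  rw [card_conjClasses_GL2]
  have hu : Nat.card Fˣ = q - 1 := by
    rw [Nat.card_eq_fintype_card, Fintype.card_units, hF]
  rw [Nat.card_sum, Nat.card_prod, hu, Nat.card_eq_fintype_card, hF]
  have h1 : 1 ≤ q := by
    rw [← hF]; exact Fintype.card_pos
  obtain ⟨k, rfl⟩ : ∃ k, q = k + 1 := ⟨q - 1, by omega⟩
  have : (k + 1)^2 = k * k + 2 * k + 1 := by ring
  rw [this]
  simp
  ring
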